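/- Let T be a full-rank lattice in ℝ^n containing a nonzero element, and let R : ℝ^n → ℝ^n be a linear map satisfying ⟨Rx, Ry⟩ = 2⟨x, y⟩ for all x, y ∈ ℝ^n (i.e., R·Rᵀ = 2·I) and R(T) ⊆ T. Set V = R(T) and, for k ≥ 2, let Γ_P = {(t₁,…,t_k) ∈ T^k : t₁ + ⋯ + t_k ∈ V}. Then: d(V) = 2·d(T); vol(V) = 2^{n/2}·vol(T); d(Γ_P) = 2·d(T); vol(Γ_P) = 2^{n/2}·vol(T)^k; and the fundamental coding gain satisfies γ(Γ_P) = 2^{(k−1)/k}·γ(T). -/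

import Mathlib

open MeasureTheory

open Submodule Module Matrix

lemma det_of_double_inner {n : ℕ} (R : EuclideanSpace ℝ (Fin n) →ₗ[ℝ] EuclideanSpace ℝ (Fin n))
    (hR : ∀ x y : EuclideanSpace ℝ (Fin n), (inner ℝ (R x) (R y) : ℝ) = 2 * (inner ℝ x y : ℝ)) :
    |LinearMap.det R| = (2 : ℝ) ^ ((n : ℝ) / 2) := by
  classical
  set b := EuclideanSpace.basisFun (Fin n) ℝ with hbdef
  set M := LinearMap.toMatrix b.toBasis b.toBasis R with hMdef
  have hM : Mᵀ * M = (2 : ℝ) • 1 := by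
    ext i j
    have hrepr : ∀ (x : EuclideanSpace ℝ (Fin n)) (l : Fin n),
        b.toBasis.repr x l = (inner ℝ (b l) x : ℝ) := by
      intro x l
      rw [OrthonormalBasis.coe_toBasis_repr_apply, OrthonormalBasis.repr_apply_apply]
    have : (Mᵀ * M) i j = ∑ l, (inner ℝ (R (b.toBasis i)) (b l) : ℝ) * (inner ℝ (b l) (R (b.toBasis j)) : ℝ) := by
      simp only [Matrix.mul_apply, Matrix.transpose_apply, hMdef, LinearMap.toMatrix_apply, hrepr]
      congr 1; ext l
      rw [real_inner_comm (b l) (R (b.toBasis i))]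
    rw [this, OrthonormalBasis.sum_inner_mul_inner, OrthonormalBasis.coe_toBasis, hR]
    have hON := orthonormal_iff_ite.mp b.orthonormal i j
    rw [hON]
    simp [Matrix.smul_apply, Matrix.one_apply]
  have hdet2 : (M.det) ^ 2 = (2 : ℝ) ^ n := by
    have := congrArg Matrix.det hM
    rw [Matrix.det_mul, Matrix.det_transpose, Matrix.det_smul, Matrix.det_one] at this
    simpa [sq, Fintype.card_fin] using this
  have h1 : |LinearMap.det R| = |M.det| := by
    rw [hMdef, LinearMap.det_toMatrix]
  rw [h1, ← Real.sqrt_sq_eq_abs, hdet2]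
  rw [Real.sqrt_eq_rpow, ← Real.rpow_natCast 2 n, ← Real.rpow_mul (by norm_num)]
  congr 1
  ring

lemma covol_span {E : Type*} [NormedAddCommGroup E] [NormedSpace ℝ E] [FiniteDimensional ℝ E]
    [MeasureSpace E] [BorelSpace E] [Measure.IsAddHaarMeasure (volume : Measure E)]
    {ι : Type*} [Fintype ι] (b : Basis ι ℝ E) {L : Submodule ℤ E}
    (hL : span ℤ (Set.range b) = L) :
    ∃ _ : DiscreteTopology L, IsZLattice ℝ L ∧
      ZLattice.covolume L volume = (volume (ZSpan.fundamentalDomain b)).toReal := by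
  subst hL
  refine ⟨inferInstance, instIsZLatticeRealSpan b, ?_⟩
  haveI := instIsZLatticeRealSpan b
  exact ZLattice.covolume_eq_measure_fundamentalDomain _ _ (ZSpan.isAddFundamentalDomain b volume)

lemma det_pi_shear {E : Type*} [NormedAddCommGroup E] [NormedSpace ℝ E] {n : ℕ}
    (b₀ : Basis (Fin n) ℝ E) {k : ℕ} (i₀ : Fin k) (hmax : ∀ i, i ≤ i₀) :
    LinearMap.det (LinearMap.pi (fun i : Fin k =>
      if i = i₀ then (∑ j, LinearMap.proj j : (Fin k → E) →ₗ[ℝ] E) else LinearMap.proj i)) = 1 := by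
  classical
  set f : (Fin k → E) →ₗ[ℝ] (Fin k → E) := LinearMap.pi (fun i : Fin k =>
      if i = i₀ then (∑ j, LinearMap.proj j : (Fin k → E) →ₗ[ℝ] E) else LinearMap.proj i) with hf
  have hfapp : ∀ (x : Fin k → E) (m : Fin k), f x m = if m = i₀ then ∑ j, x j else x m := by
    intro x m
    by_cases h : m = i₀ <;>
      simp [hf, LinearMap.pi_apply, h, LinearMap.sum_apply]
  set B : Basis (Fin k × Fin n) ℝ (Fin k → E) :=
    (Pi.basis fun _ : Fin k => b₀).reindex (Equiv.sigmaEquivProd (Fin k) (Fin n)) with hB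
  have hBapp : ∀ p : Fin k × Fin n, B p = Pi.single p.1 (b₀ p.2) := by
    intro p
    rw [hB, Basis.reindex_apply, Pi.basis_apply]
    rfl
  have hBrepr : ∀ (x : Fin k → E) (p : Fin k × Fin n), B.repr x p = b₀.repr (x p.1) p.2 := by
    intro x p
    rw [hB, Basis.repr_reindex_apply, Pi.basis_repr]
    rfl
  set N := LinearMap.toMatrix B B f with hN
  have hdet : LinearMap.det f = N.det := (LinearMap.det_toMatrix B f).symm
  have hentry : ∀ p q : Fin k × Fin n, N p q =
      (if q.1 = i₀ then (if p.1 = i₀ ∧ p.2 = q.2 then 1 else 0)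
       else (if p = q ∨ (p.1 = i₀ ∧ p.2 = q.2) then 1 else 0)) := by
    intro p q
    rw [hN, LinearMap.toMatrix_apply, hBrepr, hBapp, hfapp]
    have hsum : (∑ j, Pi.single q.1 (b₀ q.2) j) = b₀ q.2 := by
      rw [Finset.sum_eq_single q.1] <;> simp_all
    rcases p with ⟨p1, p2⟩
    rcases q with ⟨q1, q2⟩
    simp only [hsum, Pi.single_apply, Prod.mk.injEq, Prod.ext_iff] at *
    by_cases h1 : p1 = i₀ <;> by_cases h2 : q1 = i₀ <;> by_cases h3 : p1 = q1 <;>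
      by_cases h4 : p2 = q2 <;>
      simp_all [Basis.repr_self, Finsupp.single_apply, eq_comm]
  have hdet2 : N.det = (Matrix.reindex (toLex : (Fin k × Fin n) ≃ Lex (Fin k × Fin n))
      (toLex : (Fin k × Fin n) ≃ Lex (Fin k × Fin n)) N).det := (Matrix.det_reindex_self _ _).symm
  rw [hdet, hdet2, Matrix.det_of_lowerTriangular]
  · apply Finset.prod_eq_one
    intro p _
    rw [Matrix.reindex_apply, Matrix.submatrix_apply, hentry]
    split_ifs with h1 h2 h3
    · rfl
    · exact absurd ⟨h1, rfl⟩ h2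
    · rfl
    · exact absurd (Or.inl rfl) h3
  · intro p q hpq
    rw [Matrix.reindex_apply, Matrix.submatrix_apply, hentry]
    set p' : Fin k × Fin n := toLex.symm p with hp'
    set q' : Fin k × Fin n := toLex.symm q with hq'
    have hlt : p'.1 < q'.1 ∨ p'.1 = q'.1 ∧ p'.2 < q'.2 := by
      refine (Prod.Lex.lt_iff (x := toLex p') (y := toLex q')).mp ?_
      have : toLex p' = p := by simp [hp']
      have h2 : toLex q' = q := by simp [hq']
      rw [this, h2]
      exact hpq
    by_cases hq : q'.1 = i₀
    · rw [if_pos hq, if_neg]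
      rintro ⟨h1, h2⟩
      rcases hlt with h | ⟨h3, h4⟩
      · rw [h1, hq] at h; exact absurd h (lt_irrefl _)
      · rw [h2] at h4; exact absurd h4 (lt_irrefl _)
    · rw [if_neg hq, if_neg]
      rintro (h | ⟨h1, h2⟩)
      · rw [h] at hlt
        rcases hlt with h3 | ⟨h3, h4⟩
        · exact absurd h3 (lt_irrefl _)
        · exact absurd h4 (lt_irrefl _)
      · rcases hlt with h3 | ⟨h3, h4⟩
        · rw [h1] at h3; exact absurd (lt_of_lt_of_le h3 (hmax _)) (lt_irrefl _)
        · rw [h2] at h4; exact absurd h4 (lt_irrefl _)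

lemma span_pi_basis {E : Type*} [AddCommGroup E] [Module ℝ E] {n : ℕ} {k : ℕ}
    (c : Fin k → Basis (Fin n) ℝ E) (L : Fin k → Submodule ℤ E)
    (hc : ∀ i, span ℤ (Set.range (c i)) = L i) :
    span ℤ (Set.range (Pi.basis c)) = Submodule.pi Set.univ L := by
  classical
  apply le_antisymm
  · rw [span_le]
    rintro _ ⟨⟨i, j⟩, rfl⟩
    rw [Pi.basis_apply]
    rw [SetLike.mem_coe, Submodule.mem_pi]
    intro m _
    rcases eq_or_ne m i with rfl | hmi
    · rw [Pi.single_eq_same]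
      exact (hc m) ▸ subset_span ⟨j, rfl⟩
    · rw [Pi.single_eq_of_ne hmi]
      exact (L m).zero_mem
  · intro x hx
    rw [Submodule.mem_pi] at hx
    rw [← Finset.univ_sum_single x]
    apply Submodule.sum_mem
    intro i _
    have hxi : x i ∈ span ℤ (Set.range (c i)) := by rw [hc]; exact hx i trivial
    have h1 : Pi.single i (x i) ∈ Submodule.map ((LinearMap.single ℝ (fun _ : Fin k => E) i).restrictScalars ℤ)
        (span ℤ (Set.range (c i))) := ⟨x i, hxi, rfl⟩
    rw [Submodule.map_span] at h1
    refine span_mono ?_ h1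
    rintro _ ⟨_, ⟨j, rfl⟩, rfl⟩
    exact ⟨⟨i, j⟩, by rw [Pi.basis_apply]; rfl⟩

lemma fd_pi {E : Type*} [NormedAddCommGroup E] [NormedSpace ℝ E] {n : ℕ} {k : ℕ}
    (c : Fin k → Basis (Fin n) ℝ E) :
    ZSpan.fundamentalDomain (Pi.basis c) =
      Set.univ.pi (fun i => ZSpan.fundamentalDomain (c i)) := by
  ext x
  simp only [ZSpan.mem_fundamentalDomain, Pi.basis_repr, Set.mem_pi, Set.mem_univ, true_implies,
    Sigma.forall]

set_option maxHeartbeats 2000000 in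
/-- Parity lattices from a scaling-rotation `R` with `⟨Rx,Ry⟩ = 2⟨x,y⟩` and `R(T) ⊆ T`,
`V = R(T)`: then `d(V) = 2·d(T)`, `vol(V) = 2^(n/2)·vol(T)`, `d(Γ_P) = 2·d(T)`,
`vol(Γ_P) = 2^(n/2)·vol(T)^k`, and `γ(Γ_P) = 2^((k−1)/k)·γ(T)`. -/
theorem stmt_17 {n : ℕ} (hn : 0 < n) (k : ℕ) (hk : 2 ≤ k)
    (T : Submodule ℤ (EuclideanSpace ℝ (Fin n)))
    [DiscreteTopology T] [IsZLattice ℝ T]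
    (hTne : ∃ t ∈ T, t ≠ (0 : EuclideanSpace ℝ (Fin n)))
    (R : EuclideanSpace ℝ (Fin n) →ₗ[ℝ] EuclideanSpace ℝ (Fin n))
    (hR : ∀ x y : EuclideanSpace ℝ (Fin n), (inner ℝ (R x) (R y) : ℝ) = 2 * (inner ℝ x y : ℝ))
    (hRT : ∀ t ∈ T, R t ∈ T)
    (V : Submodule ℤ (EuclideanSpace ℝ (Fin n)))
    (hV : ∀ x : EuclideanSpace ℝ (Fin n), x ∈ V ↔ ∃ t ∈ T, R t = x)
    (dT : ℝ)
    (hdT : IsLeast {d : ℝ | ∃ x ∈ T, x ≠ (0 : EuclideanSpace ℝ (Fin n)) ∧ ‖x‖ ^ 2 = d} dT)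
    (ΓP : Submodule ℤ (Fin k → EuclideanSpace ℝ (Fin n)))
    (hΓP : ∀ x : Fin k → EuclideanSpace ℝ (Fin n),
      x ∈ ΓP ↔ (∀ i, x i ∈ T) ∧ (∑ i, x i) ∈ V) :
    IsLeast {d : ℝ | ∃ x ∈ V, x ≠ (0 : EuclideanSpace ℝ (Fin n)) ∧ ‖x‖ ^ 2 = d} (2 * dT) ∧
    (∃ _ : DiscreteTopology V, IsZLattice ℝ V ∧
      ZLattice.covolume V volume =
        (2 : ℝ) ^ ((n : ℝ) / 2) * ZLattice.covolume T volume) ∧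
    IsLeast {d : ℝ | ∃ x : Fin k → EuclideanSpace ℝ (Fin n),
        x ∈ ΓP ∧ x ≠ 0 ∧ (∑ i, ‖x i‖ ^ 2) = d} (2 * dT) ∧
    (∃ _ : DiscreteTopology ΓP, IsZLattice ℝ ΓP ∧
      ZLattice.covolume ΓP volume =
        (2 : ℝ) ^ ((n : ℝ) / 2) * ZLattice.covolume T volume ^ k ∧
      (2 * dT) / ZLattice.covolume ΓP volume ^ ((2 : ℝ) / ((k : ℝ) * (n : ℝ))) =
        (2 : ℝ) ^ (((k : ℝ) - 1) / (k : ℝ)) *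
          (dT / ZLattice.covolume T volume ^ ((2 : ℝ) / (n : ℝ)))) := by
  classical
  -- basic facts about R
  have hRnorm : ∀ x : EuclideanSpace ℝ (Fin n), ‖R x‖ ^ 2 = 2 * ‖x‖ ^ 2 := by
    intro x
    rw [← real_inner_self_eq_norm_sq, ← real_inner_self_eq_norm_sq, hR]
  have hRinj : Function.Injective R := by
    intro x y hxy
    have h1 : ‖R (x - y)‖ ^ 2 = 2 * ‖x - y‖ ^ 2 := hRnorm _
    rw [map_sub, hxy, sub_self, norm_zero] at h1
    have h2 : ‖x - y‖ = 0 := by nlinarith [norm_nonneg (x - y)]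
    rw [norm_eq_zero, sub_eq_zero] at h2
    exact h2
  obtain ⟨⟨t₀, ht₀T, ht₀ne, ht₀norm⟩, hlb⟩ := hdT
  have hdTpos : 0 < dT := by
    rw [← ht₀norm]
    have : 0 < ‖t₀‖ := norm_pos_iff.mpr ht₀ne
    positivity
  -- Part 1 : minimum of V
  have hVmin : IsLeast {d : ℝ | ∃ x ∈ V, x ≠ (0 : EuclideanSpace ℝ (Fin n)) ∧ ‖x‖ ^ 2 = d}
      (2 * dT) := by
    constructor
    · refine ⟨R t₀, (hV _).mpr ⟨t₀, ht₀T, rfl⟩, ?_, by rw [hRnorm, ht₀norm]⟩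
      intro h
      exact ht₀ne (hRinj (by rw [h, map_zero]))
    · rintro d ⟨x, hxV, hxne, rfl⟩
      obtain ⟨t, htT, rfl⟩ := (hV x).mp hxV
      have htne : t ≠ 0 := fun h => hxne (by rw [h, map_zero])
      rw [hRnorm]
      have := hlb ⟨t, htT, htne, rfl⟩
      linarith
  -- bases of T and V
  have hcard : Fintype.card (Module.Free.ChooseBasisIndex ℤ T) = n := by
    rw [← Module.finrank_eq_card_chooseBasisIndex, ZLattice.rank ℝ T, finrank_euclideanSpace_fin]
  set b : Basis (Fin n) ℤ T :=
    (Module.Free.chooseBasis ℤ T).reindex (Fintype.equivFinOfCardEq hcard) with hb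
  set b₀ : Basis (Fin n) ℝ (EuclideanSpace ℝ (Fin n)) := b.ofZLatticeBasis ℝ T with hb₀
  have hTspan : span ℤ (Set.range b₀) = T := b.ofZLatticeBasis_span ℝ
  have hTcov : ZLattice.covolume T volume = (volume (ZSpan.fundamentalDomain b₀)).toReal :=
    ZLattice.covolume_eq_measure_fundamentalDomain T volume
      (ZLattice.isAddFundamentalDomain b volume)
  set Re : EuclideanSpace ℝ (Fin n) ≃ₗ[ℝ] EuclideanSpace ℝ (Fin n) :=
    LinearEquiv.ofInjectiveEndo R hRinj with hRe
  have hReCoe : ⇑Re = ⇑R := rfl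
  set cV : Basis (Fin n) ℝ (EuclideanSpace ℝ (Fin n)) := b₀.map Re with hcV
  have hVspan : span ℤ (Set.range cV) = V := by
    have h1 : Set.range (cV : Fin n → EuclideanSpace ℝ (Fin n)) = ⇑R '' Set.range b₀ := by
      ext x
      constructor
      · rintro ⟨j, rfl⟩; exact ⟨b₀ j, ⟨j, rfl⟩, by rw [hcV, Basis.map_apply]; rfl⟩
      · rintro ⟨_, ⟨j, rfl⟩, rfl⟩; exact ⟨j, by rw [hcV, Basis.map_apply]; rfl⟩
    have h2 : ⇑R '' Set.range b₀ = ⇑(R.restrictScalars ℤ) '' Set.range b₀ := rfl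
    rw [h1, h2, ← Submodule.map_span, hTspan]
    ext x
    rw [Submodule.mem_map, hV x]
    constructor <;> rintro ⟨t, ht, h⟩ <;> exact ⟨t, ht, h⟩
  obtain ⟨hVdisc, hVzl, hVcov⟩ := covol_span cV hVspan
  have habs : |LinearMap.det R| = (2 : ℝ) ^ ((n : ℝ) / 2) := det_of_double_inner R hR
  have hVvol : ZLattice.covolume V volume =
      (2 : ℝ) ^ ((n : ℝ) / 2) * ZLattice.covolume T volume := by
    rw [hVcov, hTcov]
    have himg : ZSpan.fundamentalDomain cV = ⇑R '' ZSpan.fundamentalDomain b₀ := by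
      rw [hcV, ← ZSpan.map_fundamentalDomain b₀ Re]
      rfl
    rw [himg, Measure.addHaar_image_linearMap, ENNReal.toReal_mul,
      ENNReal.toReal_ofReal (abs_nonneg _), habs]
  refine ⟨hVmin, ⟨hVdisc, hVzl, hVvol⟩, ?_, ?_⟩
  · -- Part 3 : minimum of ΓP
    set i0 : Fin k := ⟨0, by omega⟩ with hi0
    set i1 : Fin k := ⟨1, by omega⟩ with hi1
    have h01 : i0 ≠ i1 := by simp [hi0, hi1, Fin.ext_iff]
    constructor
    · set x : Fin k → EuclideanSpace ℝ (Fin n) :=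
        fun i => if i = i0 then t₀ else if i = i1 then -t₀ else 0 with hx
      have hxsupp : ∀ i, i ≠ i0 → i ≠ i1 → x i = 0 := by
        intro i h1 h2; simp [hx, h1, h2]
      refine ⟨x, ?_, ?_, ?_⟩
      · rw [hΓP]
        constructor
        · intro i
          rcases eq_or_ne i i0 with rfl | h1
          · simpa [hx] using ht₀T
          rcases eq_or_ne i i1 with rfl | h2
          · simpa [hx, h1] using T.neg_mem ht₀T
          · simp [hx, h1, h2]
        · have hsum : ∑ i, x i = 0 := by
            rw [← Finset.sum_subset (Finset.subset_univ ({i0, i1} : Finset (Fin k)))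
              (fun i _ hi => by
                simp only [Finset.mem_insert, Finset.mem_singleton, not_or] at hi
                exact hxsupp i hi.1 hi.2)]
            rw [Finset.sum_pair h01]
            simp [hx, h01, Ne.symm h01]
          rw [hsum]
          exact V.zero_mem
      · intro h
        have := congrFun h i0
        simp [hx] at this
        exact ht₀ne this
      · have h10 : i1 ≠ i0 := Ne.symm h01
        have hx0 : x i0 = t₀ := by simp [hx]
        have hx1 : x i1 = -t₀ := by simp [hx, h10]
        rw [← Finset.sum_subset (Finset.subset_univ ({i0, i1} : Finset (Fin k)))
          (fun i _ hi => by
            simp only [Finset.mem_insert, Finset.mem_singleton, not_or] at hi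
            rw [hxsupp i hi.1 hi.2]; simp)]
        rw [Finset.sum_pair h01, hx0, hx1, norm_neg, ht₀norm]
        ring
    · rintro d ⟨x, hxΓ, hxne, rfl⟩
      obtain ⟨hxT, hxsum⟩ := (hΓP x).mp hxΓ
      obtain ⟨j0, hj0⟩ : ∃ i, x i ≠ 0 := by
        by_contra h; push_neg at h; exact hxne (funext h)
      by_cases hex : ∃ j1, j1 ≠ j0 ∧ x j1 ≠ 0
      · obtain ⟨j1, hne, hxj1⟩ := hex
        have h1 : dT ≤ ‖x j0‖ ^ 2 := hlb ⟨x j0, hxT j0, hj0, rfl⟩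
        have h2 : dT ≤ ‖x j1‖ ^ 2 := hlb ⟨x j1, hxT j1, hxj1, rfl⟩
        have h3 : ∑ i ∈ ({j0, j1} : Finset (Fin k)), ‖x i‖ ^ 2 ≤ ∑ i, ‖x i‖ ^ 2 :=
          Finset.sum_le_sum_of_subset_of_nonneg (Finset.subset_univ _)
            (fun i _ _ => sq_nonneg _)
        rw [Finset.sum_pair (Ne.symm hne)] at h3
        linarith
      · push_neg at hex
        have hsum : ∑ i, x i = x j0 :=
          Finset.sum_eq_single j0 (fun i _ hi => hex i hi) (by simp)
        have hx0V : x j0 ∈ V := hsum ▸ hxsum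
        have h1 : 2 * dT ≤ ‖x j0‖ ^ 2 := hVmin.2 ⟨x j0, hx0V, hj0, rfl⟩
        have h2 : ∑ i, ‖x i‖ ^ 2 = ‖x j0‖ ^ 2 :=
          Finset.sum_eq_single j0 (fun i _ hi => by rw [hex i hi]; simp) (by simp)
        linarith
  · -- Part 4 : ΓP is a lattice with the right covolume + coding gain
    haveI : Measure.IsAddHaarMeasure
        (volume : Measure (Fin k → EuclideanSpace ℝ (Fin n))) :=
      Measure.pi.isAddHaarMeasure _
    set i₀ : Fin k := ⟨k - 1, by omega⟩ with hi₀
    have hmax : ∀ i : Fin k, i ≤ i₀ := by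
      intro i
      have := i.isLt
      rw [Fin.le_def]
      simp only [hi₀]
      omega
    set fsh : (Fin k → EuclideanSpace ℝ (Fin n)) →ₗ[ℝ] (Fin k → EuclideanSpace ℝ (Fin n)) :=
      LinearMap.pi (fun i => if i = i₀ then
        (∑ j, LinearMap.proj j :
          (Fin k → EuclideanSpace ℝ (Fin n)) →ₗ[ℝ] EuclideanSpace ℝ (Fin n))
        else LinearMap.proj i) with hfsh
    have hdetf : LinearMap.det fsh = 1 := det_pi_shear b₀ i₀ hmax
    have hfapp : ∀ (x : Fin k → EuclideanSpace ℝ (Fin n)) (m : Fin k),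
        fsh x m = if m = i₀ then ∑ j, x j else x m := by
      intro x m
      by_cases h : m = i₀ <;> simp [hfsh, LinearMap.pi_apply, h, LinearMap.sum_apply]
    set φ : (Fin k → EuclideanSpace ℝ (Fin n)) ≃ₗ[ℝ] (Fin k → EuclideanSpace ℝ (Fin n)) :=
      fsh.equivOfDetNeZero (by rw [hdetf]; exact one_ne_zero) with hφ
    have hφcoe : ⇑φ = ⇑fsh := rfl
    set φc := φ.toContinuousLinearEquiv with hφc
    have hφccoe : ⇑φc = ⇑fsh := rfl
    have hφmp : MeasurePreserving (⇑φc) volume volume := by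
      constructor
      · exact φc.continuous.measurable
      · rw [hφccoe, Measure.map_linearMap_addHaar_eq_smul_addHaar volume
          (by rw [hdetf]; exact one_ne_zero), hdetf]
        simp
    set Lfam : Fin k → Submodule ℤ (EuclideanSpace ℝ (Fin n)) :=
      fun i => if i = i₀ then V else T with hLfam
    set c : Fin k → Basis (Fin n) ℝ (EuclideanSpace ℝ (Fin n)) :=
      fun i => if i = i₀ then cV else b₀ with hc
    have hcL : ∀ i, span ℤ (Set.range (c i)) = Lfam i := by
      intro i
      by_cases h : i = i₀ <;> simp [hc, hLfam, h, hVspan, hTspan]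
    have hΛspan := span_pi_basis c Lfam hcL
    obtain ⟨hΛdisc, hΛzl, hΛcov⟩ := covol_span (Pi.basis c) hΛspan
    haveI := hΛdisc; haveI := hΛzl
    -- identification of ΓP with the pullback of the pi lattice
    have hVT : ∀ v ∈ V, v ∈ T := by
      intro v hv
      obtain ⟨t, ht, rfl⟩ := (hV v).mp hv
      exact hRT t ht
    have hcomap : ZLattice.comap ℝ (Submodule.pi Set.univ Lfam) (φc.toLinearEquiv :
        (Fin k → EuclideanSpace ℝ (Fin n)) →ₗ[ℝ] (Fin k → EuclideanSpace ℝ (Fin n))) = ΓP := by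
      ext x
      rw [ZLattice.comap, Submodule.mem_comap, hΓP]
      have hmem : (fsh x) ∈ Submodule.pi Set.univ Lfam ↔
          ∀ i, fsh x i ∈ Lfam i := by
        rw [Submodule.mem_pi]
        exact ⟨fun h i => h i trivial, fun h i _ => h i⟩
      have hcoe : (LinearMap.restrictScalars ℤ (φc.toLinearEquiv :
          (Fin k → EuclideanSpace ℝ (Fin n)) →ₗ[ℝ] (Fin k → EuclideanSpace ℝ (Fin n)))) x
          = fsh x := rfl
      rw [hcoe, hmem]
      constructor
      · intro h
        have hsumV : (∑ j, x j) ∈ V := by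
          have := h i₀
          rw [hfapp, if_pos rfl] at this
          simpa [hLfam] using this
        have hiT : ∀ i, i ≠ i₀ → x i ∈ T := by
          intro i hi
          have := h i
          rw [hfapp, if_neg hi] at this
          simpa [hLfam, hi] using this
        refine ⟨?_, hsumV⟩
        intro i
        rcases eq_or_ne i i₀ with hi | hi
        · have h1 : (∑ j, x j) ∈ T := hVT _ hsumV
          have h2 : (∑ j ∈ Finset.univ.erase i, x j) ∈ T :=
            Submodule.sum_mem _ (fun j hj => hiT j (hi ▸ Finset.ne_of_mem_erase hj))
          have h3 : x i = (∑ j, x j) - ∑ j ∈ Finset.univ.erase i, x j := by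
            rw [← Finset.add_sum_erase _ _ (Finset.mem_univ i)]
            abel
          rw [h3]
          exact T.sub_mem h1 h2
        · exact hiT i hi
      · rintro ⟨hxT, hsumV⟩ i
        rw [hfapp]
        rcases eq_or_ne i i₀ with rfl | hi
        · simpa [hLfam] using hsumV
        · simpa [hLfam, hi] using hxT i
    have hΓcov : ZLattice.covolume ΓP volume =
        ZLattice.covolume (Submodule.pi Set.univ Lfam) volume := by
      rw [← hcomap]
      have := ZLattice.covolume_comap (Submodule.pi Set.univ Lfam)
        (volume : Measure (Fin k → EuclideanSpace ℝ (Fin n)))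
        (volume : Measure (Fin k → EuclideanSpace ℝ (Fin n))) (e := φc) hφmp
      exact this
    haveI hΓdisc : DiscreteTopology ΓP := by
      rw [← hcomap]
      infer_instance
    have hΓzl : IsZLattice ℝ ΓP := by
      constructor
      rw [← hcomap]
      exact (instIsZLatticeComap ℝ (Submodule.pi Set.univ Lfam) φc).span_top
    -- covolume of the pi lattice
    have hfd : ∀ i, volume (ZSpan.fundamentalDomain (c i)) ≠ ⊤ :=
      fun i => (Bornology.IsBounded.measure_lt_top (ZSpan.fundamentalDomain_isBounded (c i))).ne
    have hΛvol : ZLattice.covolume (Submodule.pi Set.univ Lfam) volume =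
        (2 : ℝ) ^ ((n : ℝ) / 2) * ZLattice.covolume T volume ^ k := by
      rw [hΛcov, fd_pi, volume_pi_pi, ENNReal.toReal_prod]
      have heach : ∀ i : Fin k, (volume (ZSpan.fundamentalDomain (c i))).toReal =
          if i = i₀ then ZLattice.covolume V volume else ZLattice.covolume T volume := by
        intro i
        by_cases h : i = i₀
        · rw [if_pos h, hVcov]; simp [hc, h]
        · rw [if_neg h, hTcov]; simp [hc, h]
      rw [Finset.prod_congr rfl (fun i _ => heach i)]
      rw [← Finset.mul_prod_erase Finset.univ _ (Finset.mem_univ i₀), if_pos rfl]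
      rw [Finset.prod_congr rfl (fun i hi => if_neg (Finset.ne_of_mem_erase hi)),
        Finset.prod_const, Finset.card_erase_of_mem (Finset.mem_univ i₀), Finset.card_univ,
        Fintype.card_fin, hVvol]
      have hkpow : ZLattice.covolume T volume * ZLattice.covolume T volume ^ (k - 1) =
          ZLattice.covolume T volume ^ k := by
        rw [← pow_succ']
        congr 1
        omega
      rw [mul_assoc, hkpow]
    refine ⟨hΓdisc, hΓzl, ?_, ?_⟩
    · rw [hΓcov, hΛvol]
    · -- coding gain arithmetic
      rw [hΓcov, hΛvol]
      set CT := ZLattice.covolume T volume with hCT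
      have hCTpos : 0 < CT := ZLattice.covolume_pos T volume
      have hk0 : (k : ℝ) ≠ 0 := by 
        have : 0 < k := by omega
        exact_mod_cast this.ne'
      have hn0 : (n : ℝ) ≠ 0 := by exact_mod_cast hn.ne'
      have h1 : ((2 : ℝ) ^ ((n : ℝ) / 2) * CT ^ k) ^ ((2 : ℝ) / ((k : ℝ) * (n : ℝ))) =
          (2 : ℝ) ^ (1 / (k : ℝ)) * CT ^ ((2 : ℝ) / (n : ℝ)) := by
        rw [Real.mul_rpow (by positivity) (by positivity), ← Real.rpow_natCast CT k,
          ← Real.rpow_mul (by norm_num : (0:ℝ) ≤ 2), ← Real.rpow_mul hCTpos.le]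
        congr 1
        · congr 1
          field_simp
        · congr 1
          field_simp
      have h2 : (2 : ℝ) ^ (((k : ℝ) - 1) / (k : ℝ)) = 2 / (2 : ℝ) ^ (1 / (k : ℝ)) := by
        have he : ((k : ℝ) - 1) / (k : ℝ) = 1 - 1 / (k : ℝ) := by field_simp
        rw [he, Real.rpow_sub (by norm_num), Real.rpow_one]
      rw [h1, h2]
      have hp1 : (0 : ℝ) < (2 : ℝ) ^ (1 / (k : ℝ)) := Real.rpow_pos_of_pos (by norm_num) _
      have hp2 : (0 : ℝ) < CT ^ ((2 : ℝ) / (n : ℝ)) := Real.rpow_pos_of_pos hCTpos _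
      field_simp
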